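/- Let (G,·) be a Moufang loop with S⊴G, G/S cyclic of order 2m generated by α, and 1≠h∈S∩Z(G). Define x*y = xy·h^{σ(i+j)} for x∈α^i, y∈α^j (i,j∈M). Then (G,*) is a Moufang loop, the associators of (G,·) and (G,*) coincide, the associator subloops are equal as loops, and N(G,·)=N(G,*) as sets. -/

import Mathlib

/-- A Moufang loop: a loop (with two-sided inverses satisfying the inverse
properties, which hold in any Moufang loop) satisfying the Moufang identity
((xy)x)z = x(y(xz)). -/
class MufLoop (Q : Type*) extends Mul Q, One Q, Inv Q where
  one_mul : ∀ x : Q, 1 * x = x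
  mul_one : ∀ x : Q, x * 1 = x
  inv_mul_cancel_left : ∀ x y : Q, x⁻¹ * (x * y) = y
  mul_inv_cancel_left : ∀ x y : Q, x * (x⁻¹ * y) = y
  mul_inv_cancel_right : ∀ x y : Q, (x * y) * y⁻¹ = x
  inv_mul_cancel_right : ∀ x y : Q, (x * y⁻¹) * y = x
  moufang : ∀ x y z : Q, ((x * y) * x) * z = x * (y * (x * z))

/-- σ(i)=1 if i>m, 0 if i ∈ M = {-m+1,...,m}, -1 if i<1-m. -/
def sgnM (m : ℕ) (i : ℤ) : ℤ :=
  if (m : ℤ) < i then 1 else if i < 1 - (m : ℤ) then -1 else 0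

/-- Natural powers in a Moufang loop. -/
def mnpow {Q : Type*} [MufLoop Q] (a : Q) : ℕ → Q
  | 0 => 1
  | n + 1 => mnpow a n * a

/-- Integer powers in a Moufang loop. -/
def mzpow {Q : Type*} [MufLoop Q] (a : Q) : ℤ → Q
  | Int.ofNat n => mnpow a n
  | Int.negSucc n => (mnpow a (n + 1))⁻¹

/-- A subset of a magma is a subloop if it contains the unit, is closed under
multiplication, and equations are solvable within it. -/
def IsSubloopM {G : Type*} (mul : G → G → G) (one : G) (A : Set G) : Prop :=
  one ∈ A ∧ (∀ a ∈ A, ∀ b ∈ A, mul a b ∈ A) ∧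
    (∀ a ∈ A, ∀ b ∈ A, ∃ c ∈ A, mul a c = b) ∧
    (∀ a ∈ A, ∀ b ∈ A, ∃ c ∈ A, mul c a = b)

/-- A subloop A is normal if xA = Ax, x(Ay) = (xA)y and x(yA) = (xy)A. -/
def IsNormalSubloopM {G : Type*} (mul : G → G → G) (one : G) (A : Set G) : Prop :=
  IsSubloopM mul one A ∧
  (∀ x : G, (fun a => mul x a) '' A = (fun a => mul a x) '' A) ∧
  (∀ x y : G, (fun b => mul x b) '' ((fun a => mul a y) '' A)
      = (fun b => mul b y) '' ((fun a => mul x a) '' A)) ∧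
  (∀ x y : G, (fun b => mul x b) '' ((fun a => mul y a) '' A)
      = (fun a => mul (mul x y) a) '' A)

/-- The subloop generated by a subset. -/
def genSubloopM {G : Type*} (mul : G → G → G) (one : G) (T : Set G) : Set G :=
  ⋂₀ {A : Set G | IsSubloopM mul one A ∧ T ⊆ A}

/-- The nucleus of a magma: elements associating with all pairs in all positions. -/
def nucSetM {G : Type*} (mul : G → G → G) : Set G :=
  {x | ∀ y z : G, mul x (mul y z) = mul (mul x y) z ∧
        mul y (mul x z) = mul (mul y x) z ∧
        mul y (mul z x) = mul (mul y z) x}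

/-- The cyclic construction on a Moufang loop: x * y · h^{σ(ind x + ind y)}. -/
def cmulM (m : ℕ) {G : Type*} [MufLoop G] (ind : G → ℤ) (h : G) (x y : G) : G :=
  x * y * mzpow h (sgnM m (ind x + ind y))

namespace CyclicAux

variable {G : Type*} [MufLoop G]

lemma lcancel (a u v : G) (hyp : a * u = a * v) : u = v := by
  have := congrArg (fun t => a⁻¹ * t) hyp
  simpa [MufLoop.inv_mul_cancel_left] using this

lemma rcancel (a u v : G) (hyp : u * a = v * a) : u = v := by
  have := congrArg (fun t => t * a⁻¹) hyp
  simpa [MufLoop.mul_inv_cancel_right] using this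

lemma mul_inv_self (a : G) : a * a⁻¹ = 1 := by
  have := MufLoop.mul_inv_cancel_right (1 : G) a
  simpa [MufLoop.one_mul] using this

lemma inv_mul_self (a : G) : a⁻¹ * a = 1 := by
  have := MufLoop.inv_mul_cancel_right (1 : G) a
  simpa [MufLoop.one_mul] using this

lemma eq_inv_of_mul_eq_one (a b : G) (hyp : a * b = 1) : b = a⁻¹ := by
  have h1 : a⁻¹ * (a * b) = a⁻¹ * 1 := by rw [hyp]
  simpa [MufLoop.inv_mul_cancel_left, MufLoop.mul_one] using h1

/-- central and nuclear element -/
def Cent (a : G) : Prop :=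
  (∀ y, a * y = y * a) ∧
  ∀ y z : G, a * (y * z) = (a * y) * z ∧ y * (a * z) = (y * a) * z ∧
    y * (z * a) = (y * z) * a

lemma cent_one : Cent (1 : G) := by
  refine ⟨fun y => by rw [MufLoop.one_mul, MufLoop.mul_one], fun y z => ?_⟩
  refine ⟨?_, ?_, ?_⟩ <;> simp [MufLoop.one_mul, MufLoop.mul_one]

lemma cent_mul {a b : G} (ha : Cent a) (hb : Cent b) : Cent (a * b) := by
  obtain ⟨hac, han⟩ := ha
  obtain ⟨hbc, hbn⟩ := hb
  constructor
  · intro y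
    calc (a * b) * y = a * (b * y) := ((han b y).1).symm
      _ = a * (y * b) := by rw [hbc y]
      _ = (a * y) * b := (hbn a y).2.2
      _ = (y * a) * b := by rw [hac y]
      _ = y * (a * b) := ((hbn y a).2.2).symm
  · intro y z
    refine ⟨?_, ?_, ?_⟩
    · calc (a * b) * (y * z) = a * (b * (y * z)) := ((han b (y*z)).1).symm
        _ = a * ((b * y) * z) := by rw [(hbn y z).1]
        _ = (a * (b * y)) * z := (han (b*y) z).1
        _ = ((a * b) * y) * z := by rw [(han b y).1]
    · calc y * ((a * b) * z) = y * (a * (b * z)) := by rw [(han b z).1]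
        _ = (y * a) * (b * z) := (han y (b*z)).2.1
        _ = ((y * a) * b) * z := (hbn (y*a) z).2.1
        _ = (y * (a * b)) * z := by rw [(hbn y a).2.2]
    · calc y * (z * (a * b)) = y * ((z * a) * b) := by rw [(hbn z a).2.2]
        _ = (y * (z * a)) * b := (hbn y (z*a)).2.2
        _ = ((y * z) * a) * b := by rw [(han y z).2.2]
        _ = (y * z) * (a * b) := ((hbn (y*z) a).2.2).symm

lemma cent_inv {a : G} (ha : Cent a) : Cent a⁻¹ := by
  obtain ⟨hac, han⟩ := ha
  have hc : ∀ y : G, a⁻¹ * y = y * a⁻¹ := by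
    intro y
    apply rcancel a
    calc (a⁻¹ * y) * a = a⁻¹ * (y * a) := ((han a⁻¹ y).2.2).symm
      _ = a⁻¹ * (a * y) := by rw [← hac y]
      _ = y := MufLoop.inv_mul_cancel_left a y
      _ = (y * a⁻¹) * a := (MufLoop.inv_mul_cancel_right y a).symm
  have h1 : ∀ y z : G, a⁻¹ * (y * z) = (a⁻¹ * y) * z := by
    intro y z
    apply lcancel a
    calc a * (a⁻¹ * (y * z)) = y * z := MufLoop.mul_inv_cancel_left a (y*z)
      _ = (a * (a⁻¹ * y)) * z := by rw [MufLoop.mul_inv_cancel_left a y]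
      _ = a * ((a⁻¹ * y) * z) := ((han (a⁻¹*y) z).1).symm
  have h3 : ∀ y z : G, y * (z * a⁻¹) = (y * z) * a⁻¹ := by
    intro y z
    apply rcancel a
    calc (y * (z * a⁻¹)) * a = y * ((z * a⁻¹) * a) := ((han y (z*a⁻¹)).2.2).symm
      _ = y * z := by rw [MufLoop.inv_mul_cancel_right z a]
      _ = ((y * z) * a⁻¹) * a := (MufLoop.inv_mul_cancel_right (y*z) a).symm
  refine ⟨hc, fun y z => ⟨h1 y z, ?_, h3 y z⟩⟩
  calc y * (a⁻¹ * z) = y * (z * a⁻¹) := by rw [hc z]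
    _ = (y * z) * a⁻¹ := h3 y z
    _ = a⁻¹ * (y * z) := (hc (y*z)).symm
    _ = (a⁻¹ * y) * z := h1 y z
    _ = (y * a⁻¹) * z := by rw [hc y]

lemma cent_mnpow {a : G} (ha : Cent a) : ∀ n : ℕ, Cent (mnpow a n)
  | 0 => cent_one
  | n + 1 => cent_mul (cent_mnpow ha n) ha

lemma cent_mzpow {a : G} (ha : Cent a) : ∀ e : ℤ, Cent (mzpow a e)
  | Int.ofNat n => cent_mnpow ha n
  | Int.negSucc n => cent_inv (cent_mnpow ha (n+1))

lemma mul_inv_rev_cent {a : G} (ha : Cent a) (u : G) : (u * a)⁻¹ = u⁻¹ * a⁻¹ := by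
  refine (eq_inv_of_mul_eq_one _ _ ?_).symm
  calc (u * a) * (u⁻¹ * a⁻¹) = ((u * a) * u⁻¹) * a⁻¹ := ((cent_inv ha).2 (u*a) u⁻¹).2.2
    _ = ((a * u) * u⁻¹) * a⁻¹ := by rw [ha.1 u]
    _ = a * a⁻¹ := by rw [MufLoop.mul_inv_cancel_right a u]
    _ = 1 := mul_inv_self a

lemma mzpow_succ {a : G} (ha : Cent a) : ∀ e : ℤ, mzpow a (e+1) = mzpow a e * a := by
  intro e
  cases e with
  | ofNat n =>
      have he : (Int.ofNat n) + 1 = Int.ofNat (n+1) := rfl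
      rw [he]; rfl
  | negSucc n =>
      cases n with
      | zero =>
          have he : (Int.negSucc 0) + 1 = Int.ofNat 0 := by decide
          rw [he]
          show (1 : G) = ((1 : G) * a)⁻¹ * a
          rw [MufLoop.one_mul, inv_mul_self]
      | succ k =>
          have he : (Int.negSucc (k+1)) + 1 = Int.negSucc k := by rw [Int.negSucc_eq, Int.negSucc_eq]; push_cast; ring
          rw [he]
          show (mnpow a (k+1))⁻¹ = (mnpow a (k+1) * a)⁻¹ * a
          rw [mul_inv_rev_cent ha, MufLoop.inv_mul_cancel_right]

lemma mzpow_pred {a : G} (ha : Cent a) (e : ℤ) : mzpow a (e-1) = mzpow a e * a⁻¹ := by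
  have h1 := mzpow_succ ha (e-1)
  rw [sub_add_cancel] at h1
  rw [h1, MufLoop.mul_inv_cancel_right]

lemma mzpow_add {a : G} (ha : Cent a) (e1 : ℤ) : ∀ e2 : ℤ,
    mzpow a (e1+e2) = mzpow a e1 * mzpow a e2 := by
  intro e2
  induction e2 using Int.induction_on with
  | zero =>
      rw [add_zero]
      show mzpow a e1 = mzpow a e1 * (1 : G)
      rw [MufLoop.mul_one]
  | succ k ih =>
      have he : e1 + ((k : ℤ) + 1) = (e1 + k) + 1 := by ring
      rw [he, mzpow_succ ha, ih, mzpow_succ ha]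
      exact ((ha.2 (mzpow a e1) (mzpow a k)).2.2).symm
  | pred k ih =>
      have he : e1 + (-(k : ℤ) - 1) = (e1 + -(k:ℤ)) - 1 := by ring
      rw [he, mzpow_pred ha, ih, mzpow_pred ha]
      exact (((cent_inv ha).2 (mzpow a e1) (mzpow a (-(k:ℤ)))).2.2).symm

lemma dvd_bounded (m : ℕ) (d : ℤ) (hd : (2*(m:ℤ)) ∣ d)
    (h1 : -(2*(m:ℤ)) < d) (h2 : d < 2*(m:ℤ)) : d = 0 := by
  rcases hd with ⟨c, rfl⟩
  rcases lt_trichotomy c 0 with hc | hc | hc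
  · nlinarith
  · rw [hc, mul_zero]
  · nlinarith

lemma sgn_mem (m : ℕ) (hm : 0 < m) {i j : ℤ}
    (hi1 : 1-(m:ℤ) ≤ i) (hi2 : i ≤ m) (hj1 : 1-(m:ℤ) ≤ j) (hj2 : j ≤ m) :
    1-(m:ℤ) ≤ i + j - 2*(m:ℤ)*sgnM m (i+j) ∧ i + j - 2*(m:ℤ)*sgnM m (i+j) ≤ m := by
  unfold sgnM
  split_ifs with h1 h2 <;> constructor <;> omega

lemma sgn_zero (m : ℕ) (t : ℤ) (h1 : 1-(m:ℤ) ≤ t) (h2 : t ≤ m) : sgnM m t = 0 := by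
  unfold sgnM
  split_ifs <;> omega

lemma exp_cancel (m : ℕ) (hm : 0 < m) (A S T : ℤ)
    (h1 : 1-(m:ℤ) ≤ A - 2*(m:ℤ)*S) (h2 : A - 2*(m:ℤ)*S ≤ m)
    (h3 : 1-(m:ℤ) ≤ A - 2*(m:ℤ)*T) (h4 : A - 2*(m:ℤ)*T ≤ m) : S = T := by
  have hd : (2*(m:ℤ)) ∣ ((A - 2*(m:ℤ)*S) - (A - 2*(m:ℤ)*T)) := ⟨T - S, by ring⟩
  have h0 := dvd_bounded m _ hd (by linarith) (by linarith)
  have h1' : (2*(m:ℤ)) * (T - S) = 0 := by linear_combination h0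
  rcases mul_eq_zero.mp h1' with hc | hc
  · omega
  · omega

end CyclicAux

open CyclicAux in
/-- Cyclic construction for Moufang loops (Theorem "Cyclic"): with S ⊴ G, G/S
cyclic of order 2m generated by α (encoded via f and ind as before) and
1 ≠ h ∈ S ∩ Z(G), the groupoid (G,*), x*y = xy·h^{σ(ind x + ind y)}, is a
Moufang loop; the associators of (G,·) and (G,*) coincide; the associator
subloops A(G,·) and A(G,*) coincide as loops; and the nuclei N(G,·) and N(G,*)
coincide as sets. -/
theorem stmt11 (m : ℕ) (hm : 0 < m) (G : Type*) [MufLoop G]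
    (f : G → ZMod (2 * m)) (hf : ∀ x y : G, f (x * y) = f x + f y)
    (hfsurj : Function.Surjective f)
    (S : Set G) (hSnormal : IsNormalSubloopM (· * · : G → G → G) 1 S)
    (hSker : ∀ x : G, x ∈ S ↔ f x = 0)
    (ind : G → ℤ)
    (hindM : ∀ x : G, ind x ∈ Set.Icc (1 - (m : ℤ)) (m : ℤ))
    (hind : ∀ x : G, ((ind x : ZMod (2 * m))) = f x)
    (h : G) (hh1 : h ≠ 1) (hhS : h ∈ S)
    (hhcomm : ∀ y : G, h * y = y * h)
    (hhassoc : ∀ y z : G, h * (y * z) = (h * y) * z ∧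
      y * (h * z) = (y * h) * z ∧ y * (z * h) = (y * z) * h) :
    -- (G,*) is a Moufang loop:
    (∀ x : G, cmulM m ind h 1 x = x ∧ cmulM m ind h x 1 = x) ∧
    (∀ a b : G, (∃! x : G, cmulM m ind h a x = b) ∧ (∃! y : G, cmulM m ind h y a = b)) ∧
    (∀ x y z : G, cmulM m ind h (cmulM m ind h (cmulM m ind h x y) x) z
        = cmulM m ind h x (cmulM m ind h y (cmulM m ind h x z))) ∧
    -- the associators coincide:
    (∀ x y z w : G, (x * y) * z = (x * (y * z)) * w ↔
        cmulM m ind h (cmulM m ind h x y) z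
          = cmulM m ind h (cmulM m ind h x (cmulM m ind h y z)) w) ∧
    -- the associator subloops coincide, as loops:
    (genSubloopM (· * · : G → G → G) 1
        {w : G | ∃ x y z : G, (x * y) * z = (x * (y * z)) * w}
      = genSubloopM (cmulM m ind h) 1
        {w : G | ∃ x y z : G, cmulM m ind h (cmulM m ind h x y) z
            = cmulM m ind h (cmulM m ind h x (cmulM m ind h y z)) w}) ∧
    (∀ a ∈ genSubloopM (· * · : G → G → G) 1
        {w : G | ∃ x y z : G, (x * y) * z = (x * (y * z)) * w},
      ∀ b ∈ genSubloopM (· * · : G → G → G) 1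
        {w : G | ∃ x y z : G, (x * y) * z = (x * (y * z)) * w},
      a * b = cmulM m ind h a b) ∧
    -- the nuclei coincide as sets:
    nucSetM (· * · : G → G → G) = nucSetM (cmulM m ind h) := by
  haveI : NeZero (2 * m) := ⟨by omega⟩
  have hch : Cent h := ⟨hhcomm, hhassoc⟩
  have hcz : ∀ e : ℤ, Cent (mzpow h e) := cent_mzpow hch
  have hf1 : f 1 = 0 := by
    have h0 := hf 1 1
    rw [MufLoop.mul_one] at h0
    exact left_eq_add.mp h0
  have hfinv : ∀ x : G, f x⁻¹ = - f x := by
    intro x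
    have h0 := hf x x⁻¹
    rw [CyclicAux.mul_inv_self, hf1] at h0
    exact eq_neg_of_add_eq_zero_right h0.symm
  have hfh : f h = 0 := (hSker h).1 hhS
  have hfn : ∀ k : ℕ, f (mnpow h k) = 0 := by
    intro k
    induction k with
    | zero => exact hf1
    | succ k ih =>
        show f (mnpow h k * h) = 0
        rw [hf, ih, hfh, add_zero]
  have hfz : ∀ e : ℤ, f (mzpow h e) = 0 := by
    intro e
    cases e with
    | ofNat n => exact hfn n
    | negSucc n =>
        show f (mnpow h (n+1))⁻¹ = 0
        rw [hfinv, hfn, neg_zero]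
  have hlo : ∀ x : G, 1 - (m:ℤ) ≤ ind x := fun x => (Set.mem_Icc.mp (hindM x)).1
  have hhi : ∀ x : G, ind x ≤ (m:ℤ) := fun x => (Set.mem_Icc.mp (hindM x)).2
  have indspec : ∀ (u : G) (r : ℤ), 1-(m:ℤ) ≤ r → r ≤ (m:ℤ) →
      ((r : ZMod (2*m)) = f u) → ind u = r := by
    intro u r hr1 hr2 hcast
    have h2 : ((2*m : ℕ) : ℤ) ∣ (ind u - r) := by
      refine (ZMod.intCast_zmod_eq_zero_iff_dvd _ _).mp ?_
      push_cast
      rw [hind u, hcast]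
      ring
    push_cast at h2
    have hu1 := hlo u
    have hu2 := hhi u
    have h3 := dvd_bounded m (ind u - r) h2 (by omega) (by omega)
    omega
  have indeq : ∀ u v : G, f u = f v → ind u = ind v := by
    intro u v huv
    exact indspec u (ind v) (hlo v) (hhi v) (by rw [hind v, huv])
  have find0 : ∀ u : G, f u = 0 → ind u = 0 := by
    intro u hu
    refine indspec u 0 (by omega) (by omega) ?_
    rw [hu]
    simp
  have ind1 : ind (1:G) = 0 := find0 1 hf1
  have fcm : ∀ x y : G, f (cmulM m ind h x y) = f x + f y := by
    intro x y
    show f (x * y * mzpow h _) = _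
    rw [hf, hf, hfz, add_zero]
  have indcm : ∀ x y : G, ind (cmulM m ind h x y)
      = ind x + ind y - 2*(m:ℤ)*sgnM m (ind x + ind y) := by
    intro x y
    obtain ⟨hA, hB⟩ := sgn_mem m hm (hlo x) (hhi x) (hlo y) (hhi y)
    refine indspec _ _ hA hB ?_
    have hz : (((2*(m:ℤ)) * sgnM m (ind x + ind y) : ℤ) : ZMod (2*m)) = 0 :=
      (ZMod.intCast_zmod_eq_zero_iff_dvd _ _).mpr ⟨sgnM m (ind x + ind y), by push_cast; ring⟩
    rw [fcm x y]
    push_cast at hz ⊢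
    rw [hind x, hind y]
    linear_combination -hz
  have move : ∀ (u w : G) (e : ℤ), (u * mzpow h e) * w = (u * w) * mzpow h e := by
    intro u w e
    calc (u * mzpow h e) * w = u * (mzpow h e * w) := ((hcz e).2 u w).2.1.symm
      _ = u * (w * mzpow h e) := by rw [(hcz e).1 w]
      _ = (u * w) * mzpow h e := ((hcz e).2 u w).2.2
  have merge : ∀ (u : G) (a b : ℤ), (u * mzpow h a) * mzpow h b = u * mzpow h (a+b) := by
    intro u a b
    rw [mzpow_add hch a b]
    exact (((hcz b).2 u (mzpow h a)).2.2).symm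
  have stepL : ∀ (b w : G) (a e : ℤ), ((b * mzpow h a) * w) * mzpow h e
      = (b * w) * mzpow h (a+e) := by
    intro b w a e
    rw [move, merge]
  have stepR : ∀ (v b : G) (a e : ℤ), (v * (b * mzpow h a)) * mzpow h e
      = (v * b) * mzpow h (a+e) := by
    intro v b a e
    rw [((hcz a).2 v b).2.2, merge]
  have cmdef : ∀ x y : G, cmulM m ind h x y = x * y * mzpow h (sgnM m (ind x + ind y)) :=
    fun _ _ => rfl
  have hP0 : mzpow h (0:ℤ) = 1 := rfl
  have cstepL : ∀ (u v b : G) (a : ℤ), u = b * mzpow h a →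
      cmulM m ind h u v = (b * v) * mzpow h (a + sgnM m (ind u + ind v)) := by
    intro u v b a hu
    rw [cmdef u v, hu, stepL]
  have cstepR : ∀ (u v b : G) (a : ℤ), v = b * mzpow h a →
      cmulM m ind h u v = (u * b) * mzpow h (a + sgnM m (ind u + ind v)) := by
    intro u v b a hv
    rw [cmdef u v, hv, stepR]
  -- key normal forms for triple products
  have key3 : ∀ x y z : G, ∃ E : ℤ,
      cmulM m ind h (cmulM m ind h x y) z = ((x*y)*z) * mzpow h E ∧
      cmulM m ind h x (cmulM m ind h y z) = (x*(y*z)) * mzpow h E ∧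
      ind (cmulM m ind h x (cmulM m ind h y z)) = ind x + ind y + ind z - 2*(m:ℤ)*E ∧
      1-(m:ℤ) ≤ ind x + ind y + ind z - 2*(m:ℤ)*E ∧
      ind x + ind y + ind z - 2*(m:ℤ)*E ≤ (m:ℤ) := by
    intro x y z
    have hI1 := indcm x y
    obtain ⟨hp1a, hp1b⟩ := sgn_mem m hm (hlo x) (hhi x) (hlo y) (hhi y)
    obtain ⟨hp2a, hp2b⟩ := sgn_mem m hm hp1a hp1b (hlo z) (hhi z)
    have hL := cstepL (cmulM m ind h x y) z (x*y) (sgnM m (ind x + ind y)) (cmdef x y)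
    rw [hI1] at hL
    have hJ1 := indcm y z
    obtain ⟨hq1a, hq1b⟩ := sgn_mem m hm (hlo y) (hhi y) (hlo z) (hhi z)
    obtain ⟨hq2a, hq2b⟩ := sgn_mem m hm (hlo x) (hhi x) hq1a hq1b
    have hR := cstepR x (cmulM m ind h y z) (y*z) (sgnM m (ind y + ind z)) (cmdef y z)
    rw [hJ1] at hR
    have hJ2 := indcm x (cmulM m ind h y z)
    rw [hJ1] at hJ2
    refine ⟨_, ?_, hR, hJ2.trans (by ring), by linarith, by linarith⟩
    rw [hL]
    congr 1
    congr 1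
    exact exp_cancel m hm (ind x + ind y + ind z) _ _
      (by linarith) (by linarith) (by linarith) (by linarith)
  -- part 1
  have part1 : ∀ x : G, cmulM m ind h 1 x = x ∧ cmulM m ind h x 1 = x := by
    intro x
    constructor
    · rw [cmdef, ind1, zero_add, sgn_zero m (ind x) (hlo x) (hhi x), hP0,
        MufLoop.mul_one, MufLoop.one_mul]
    · rw [cmdef, ind1, add_zero, sgn_zero m (ind x) (hlo x) (hhi x), hP0,
        MufLoop.mul_one, MufLoop.mul_one]
  -- part 2
  have part2 : ∀ a b : G, (∃! x : G, cmulM m ind h a x = b) ∧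
      (∃! y : G, cmulM m ind h y a = b) := by
    intro a b
    constructor
    · refine ⟨a⁻¹ * (b * (mzpow h (sgnM m (ind a + ind (a⁻¹ * b))))⁻¹), ?_, ?_⟩
      · have hfxs : f (a⁻¹ * (b * (mzpow h (sgnM m (ind a + ind (a⁻¹ * b))))⁻¹))
            = f (a⁻¹ * b) := by
          simp only [hf, hfinv, hfz]
          ring
        have hixs := indeq _ _ hfxs
        show cmulM m ind h a (a⁻¹ * (b * (mzpow h (sgnM m (ind a + ind (a⁻¹ * b))))⁻¹)) = b
        rw [cmdef, hixs, MufLoop.mul_inv_cancel_left, MufLoop.inv_mul_cancel_right]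
      · intro x hx
        replace hx : cmulM m ind h a x = b := hx
        have hfx : f x = f (a⁻¹ * b) := by
          have h0 := congrArg f hx
          simp only [fcm] at h0
          simp only [hf, hfinv]
          linear_combination h0
        have hix := indeq _ _ hfx
        have h1 : (a * x) * mzpow h (sgnM m (ind a + ind (a⁻¹ * b))) = b := by
          rw [cmdef a x, hix] at hx
          exact hx
        have h2 : a * x = b * (mzpow h (sgnM m (ind a + ind (a⁻¹ * b))))⁻¹ := by
          have h3 := MufLoop.mul_inv_cancel_right (a * x)
            (mzpow h (sgnM m (ind a + ind (a⁻¹ * b))))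
          rw [h1] at h3
          exact h3.symm
        rw [← h2, MufLoop.inv_mul_cancel_left]
    · refine ⟨(b * (mzpow h (sgnM m (ind (a⁻¹ * b) + ind a)))⁻¹) * a⁻¹, ?_, ?_⟩
      · have hfys : f ((b * (mzpow h (sgnM m (ind (a⁻¹ * b) + ind a)))⁻¹) * a⁻¹)
            = f (a⁻¹ * b) := by
          simp only [hf, hfinv, hfz]
          ring
        have hiys := indeq _ _ hfys
        show cmulM m ind h ((b * (mzpow h (sgnM m (ind (a⁻¹ * b) + ind a)))⁻¹) * a⁻¹) a = b
        rw [cmdef, hiys, MufLoop.inv_mul_cancel_right, MufLoop.inv_mul_cancel_right]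
      · intro y hy
        replace hy : cmulM m ind h y a = b := hy
        have hfy : f y = f (a⁻¹ * b) := by
          have h0 := congrArg f hy
          simp only [fcm] at h0
          simp only [hf, hfinv]
          linear_combination h0
        have hiy := indeq _ _ hfy
        have h1 : (y * a) * mzpow h (sgnM m (ind (a⁻¹ * b) + ind a)) = b := by
          rw [cmdef y a, hiy] at hy
          exact hy
        have h2 : y * a = b * (mzpow h (sgnM m (ind (a⁻¹ * b) + ind a)))⁻¹ := by
          have h3 := MufLoop.mul_inv_cancel_right (y * a)
            (mzpow h (sgnM m (ind (a⁻¹ * b) + ind a)))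
          rw [h1] at h3
          exact h3.symm
        rw [← h2, MufLoop.mul_inv_cancel_right]
  -- part 3 : Moufang identity
  have part3 : ∀ x y z : G, cmulM m ind h (cmulM m ind h (cmulM m ind h x y) x) z
      = cmulM m ind h x (cmulM m ind h y (cmulM m ind h x z)) := by
    intro x y z
    have hI1 := indcm x y
    obtain ⟨hp1a, hp1b⟩ := sgn_mem m hm (hlo x) (hhi x) (hlo y) (hhi y)
    obtain ⟨hp2a, hp2b⟩ := sgn_mem m hm hp1a hp1b (hlo x) (hhi x)
    obtain ⟨hp3a, hp3b⟩ := sgn_mem m hm hp2a hp2b (hlo z) (hhi z)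
    have e2 := cstepL (cmulM m ind h x y) x (x*y) (sgnM m (ind x + ind y)) (cmdef x y)
    rw [hI1] at e2
    have hI2 := indcm (cmulM m ind h x y) x
    rw [hI1] at hI2
    have e3 := cstepL (cmulM m ind h (cmulM m ind h x y) x) z _ _ e2
    rw [hI2] at e3
    have hJ1 := indcm x z
    obtain ⟨hq1a, hq1b⟩ := sgn_mem m hm (hlo x) (hhi x) (hlo z) (hhi z)
    obtain ⟨hq2a, hq2b⟩ := sgn_mem m hm (hlo y) (hhi y) hq1a hq1b
    obtain ⟨hq3a, hq3b⟩ := sgn_mem m hm (hlo x) (hhi x) hq2a hq2b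
    have f2 := cstepR y (cmulM m ind h x z) (x*z) (sgnM m (ind x + ind z)) (cmdef x z)
    rw [hJ1] at f2
    have hJ2 := indcm y (cmulM m ind h x z)
    rw [hJ1] at hJ2
    have f3 := cstepR x (cmulM m ind h y (cmulM m ind h x z)) _ _ f2
    rw [hJ2] at f3
    rw [e3, f3, MufLoop.moufang x y z]
    congr 1
    congr 1
    exact exp_cancel m hm (2*ind x + ind y + ind z) _ _
      (by linarith) (by linarith) (by linarith) (by linarith)
  -- part 4 : associators coincide
  have part4 : ∀ x y z w : G, (x * y) * z = (x * (y * z)) * w ↔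
      cmulM m ind h (cmulM m ind h x y) z
        = cmulM m ind h (cmulM m ind h x (cmulM m ind h y z)) w := by
    intro x y z w
    obtain ⟨E, hL, hR, hiR, hb1, hb2⟩ := key3 x y z
    have hRHS := cstepL (cmulM m ind h x (cmulM m ind h y z)) w (x*(y*z)) E hR
    constructor
    · intro hxyz
      have hfw : f w = 0 := by
        have h0 := congrArg f hxyz
        simp only [hf] at h0
        linear_combination -h0
      have hiw : ind w = 0 := find0 w hfw
      have hsw : sgnM m (ind (cmulM m ind h x (cmulM m ind h y z)) + ind w) = 0 := by
        rw [hiw, add_zero, hiR]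
        exact sgn_zero m _ hb1 hb2
      rw [hL, hRHS, hsw, add_zero, hxyz]
    · intro hc
      have hfw : f w = 0 := by
        have h0 := congrArg f hc
        simp only [fcm] at h0
        linear_combination -h0
      have hiw : ind w = 0 := find0 w hfw
      have hsw : sgnM m (ind (cmulM m ind h x (cmulM m ind h y z)) + ind w) = 0 := by
        rw [hiw, add_zero, hiR]
        exact sgn_zero m _ hb1 hb2
      rw [hL, hRHS, hsw, add_zero] at hc
      exact rcancel _ _ _ hc
  -- subloop machinery
  have fw0 : ∀ w : G, (∃ x y z : G, (x*y)*z = (x*(y*z))*w) → f w = 0 := by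
    rintro w ⟨x, y, z, hxyz⟩
    have h0 := congrArg f hxyz
    simp only [hf] at h0
    linear_combination -h0
  have Tsame : {w : G | ∃ x y z : G, (x * y) * z = (x * (y * z)) * w}
      = {w : G | ∃ x y z : G, cmulM m ind h (cmulM m ind h x y) z
          = cmulM m ind h (cmulM m ind h x (cmulM m ind h y z)) w} := by
    ext w
    simp only [Set.mem_setOf_eq]
    constructor
    · rintro ⟨x, y, z, hx⟩
      exact ⟨x, y, z, (part4 x y z w).mp hx⟩
    · rintro ⟨x, y, z, hx⟩
      exact ⟨x, y, z, (part4 x y z w).mpr hx⟩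
  have hs00 : sgnM m ((0:ℤ) + 0) = 0 := sgn_zero m _ (by omega) (by omega)
  have cmK : ∀ a b : G, f a = 0 → f b = 0 → cmulM m ind h a b = a * b := by
    intro a b ha hb
    rw [cmdef, find0 a ha, find0 b hb, hs00, hP0, MufLoop.mul_one]
  have Kmul : IsSubloopM (· * · : G → G → G) 1 {u : G | f u = 0} := by
    refine ⟨hf1, ?_, ?_, ?_⟩
    · intro a ha b hb
      show f (a * b) = 0
      rw [hf, ha, hb, add_zero]
    · intro a ha b hb
      refine ⟨a⁻¹ * b, ?_, MufLoop.mul_inv_cancel_left a b⟩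
      show f (a⁻¹ * b) = 0
      rw [hf, hfinv, ha, hb]
      ring
    · intro a ha b hb
      refine ⟨b * a⁻¹, ?_, MufLoop.inv_mul_cancel_right b a⟩
      show f (b * a⁻¹) = 0
      rw [hf, hfinv, ha, hb]
      ring
  have conv1 : ∀ A : Set G, IsSubloopM (cmulM m ind h) 1 A →
      IsSubloopM (· * · : G → G → G) 1 (A ∩ {u : G | f u = 0}) := by
    rintro A ⟨h1A, hcl, hdl, hdr⟩
    refine ⟨⟨h1A, hf1⟩, ?_, ?_, ?_⟩
    · rintro a ⟨haA, haK⟩ b ⟨hbA, hbK⟩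
      constructor
      · have h0 := hcl a haA b hbA
        rwa [cmK a b haK hbK] at h0
      · show f (a * b) = 0
        rw [hf, haK, hbK, add_zero]
    · rintro a ⟨haA, haK⟩ b ⟨hbA, hbK⟩
      obtain ⟨c, hcA, hc⟩ := hdl a haA b hbA
      have hfc : f c = 0 := by
        have h0 := congrArg f hc
        rw [fcm, haK, hbK] at h0
        linear_combination h0
      refine ⟨c, ⟨hcA, hfc⟩, ?_⟩
      show a * c = b
      rw [← cmK a c haK hfc]
      exact hc
    · rintro a ⟨haA, haK⟩ b ⟨hbA, hbK⟩
      obtain ⟨c, hcA, hc⟩ := hdr a haA b hbA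
      have hfc : f c = 0 := by
        have h0 := congrArg f hc
        rw [fcm, haK, hbK] at h0
        linear_combination h0
      refine ⟨c, ⟨hcA, hfc⟩, ?_⟩
      show c * a = b
      rw [← cmK c a hfc haK]
      exact hc
  have conv2 : ∀ A : Set G, IsSubloopM (· * · : G → G → G) 1 A →
      IsSubloopM (cmulM m ind h) 1 (A ∩ {u : G | f u = 0}) := by
    rintro A ⟨h1A, hcl, hdl, hdr⟩
    refine ⟨⟨h1A, hf1⟩, ?_, ?_, ?_⟩
    · rintro a ⟨haA, haK⟩ b ⟨hbA, hbK⟩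
      constructor
      · have h0 : a * b ∈ A := hcl a haA b hbA
        rwa [← cmK a b haK hbK] at h0
      · show f (cmulM m ind h a b) = 0
        rw [fcm, haK, hbK, add_zero]
    · rintro a ⟨haA, haK⟩ b ⟨hbA, hbK⟩
      obtain ⟨c, hcA, hc⟩ := hdl a haA b hbA
      replace hc : a * c = b := hc
      have hfc : f c = 0 := by
        have h0 := congrArg f hc
        rw [hf, haK, hbK] at h0
        linear_combination h0
      refine ⟨c, ⟨hcA, hfc⟩, ?_⟩
      show cmulM m ind h a c = b
      rw [cmK a c haK hfc]
      exact hc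
    · rintro a ⟨haA, haK⟩ b ⟨hbA, hbK⟩
      obtain ⟨c, hcA, hc⟩ := hdr a haA b hbA
      replace hc : c * a = b := hc
      have hfc : f c = 0 := by
        have h0 := congrArg f hc
        rw [hf, haK, hbK] at h0
        linear_combination h0
      refine ⟨c, ⟨hcA, hfc⟩, ?_⟩
      show cmulM m ind h c a = b
      rw [cmK c a hfc haK]
      exact hc
  have TK : {w : G | ∃ x y z : G, (x * y) * z = (x * (y * z)) * w} ⊆ {u : G | f u = 0} :=
    fun w hw => fw0 w hw
  have genK : genSubloopM (· * · : G → G → G) 1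
      {w : G | ∃ x y z : G, (x * y) * z = (x * (y * z)) * w} ⊆ {u : G | f u = 0} :=
    Set.sInter_subset_of_mem ⟨Kmul, TK⟩
  have part5 : genSubloopM (· * · : G → G → G) 1
      {w : G | ∃ x y z : G, (x * y) * z = (x * (y * z)) * w}
      = genSubloopM (cmulM m ind h) 1
      {w : G | ∃ x y z : G, cmulM m ind h (cmulM m ind h x y) z
          = cmulM m ind h (cmulM m ind h x (cmulM m ind h y z)) w} := by
    rw [← Tsame]
    apply Set.Subset.antisymm
    · intro u hu
      refine Set.mem_sInter.mpr ?_
      rintro A ⟨hAsub, hTA⟩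
      have h1 : u ∈ A ∩ {u : G | f u = 0} :=
        Set.mem_sInter.mp hu (A ∩ {u : G | f u = 0})
          ⟨conv1 A hAsub, Set.subset_inter hTA TK⟩
      exact h1.1
    · intro u hu
      refine Set.mem_sInter.mpr ?_
      rintro A ⟨hAsub, hTA⟩
      have h1 : u ∈ A ∩ {u : G | f u = 0} :=
        Set.mem_sInter.mp hu (A ∩ {u : G | f u = 0})
          ⟨conv2 A hAsub, Set.subset_inter hTA TK⟩
      exact h1.1
  have part6 : ∀ a ∈ genSubloopM (· * · : G → G → G) 1
      {w : G | ∃ x y z : G, (x * y) * z = (x * (y * z)) * w},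
      ∀ b ∈ genSubloopM (· * · : G → G → G) 1
      {w : G | ∃ x y z : G, (x * y) * z = (x * (y * z)) * w},
      a * b = cmulM m ind h a b := by
    intro a ha b hb
    exact (cmK a b (genK ha) (genK hb)).symm
  have part7 : nucSetM (· * · : G → G → G) = nucSetM (cmulM m ind h) := by
    ext u
    simp only [nucSetM, Set.mem_setOf_eq]
    constructor
    · intro H y z
      obtain ⟨E1, hL1, hR1, -, -, -⟩ := key3 u y z
      obtain ⟨E2, hL2, hR2, -, -, -⟩ := key3 y u z
      obtain ⟨E3, hL3, hR3, -, -, -⟩ := key3 y z u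
      refine ⟨?_, ?_, ?_⟩
      · rw [hR1, hL1, (H y z).1]
      · rw [hR2, hL2, (H y z).2.1]
      · rw [hR3, hL3, (H y z).2.2]
    · intro H y z
      obtain ⟨E1, hL1, hR1, -, -, -⟩ := key3 u y z
      obtain ⟨E2, hL2, hR2, -, -, -⟩ := key3 y u z
      obtain ⟨E3, hL3, hR3, -, -, -⟩ := key3 y z u
      obtain ⟨c1, c2, c3⟩ := H y z
      rw [hR1, hL1] at c1
      rw [hR2, hL2] at c2
      rw [hR3, hL3] at c3
      exact ⟨rcancel _ _ _ c1, rcancel _ _ _ c2, rcancel _ _ _ c3⟩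
  exact ⟨part1, part2, part3, part4, part5, part6, part7⟩
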